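/- arXiv:1706.07082 — 2 statements merged into one kernel-verified Lean document; each statement's English description precedes it below -/
import Mathlib

section
/- Let S be a right zero (or left zero) semigroup and ω a weight on S. Then the following are equivalent: (i) ℓ¹(S, ω) is pseudo-amenable; (ii) S is a singleton; (iii) ℓ¹(S, ω) is amenable. -/
open scoped TensorProduct
open Filter
open scoped Classical

/-- A weight on a semigroup: strictly positive and submultiplicative. -/
def IsWeight {S : Type*} [Mul S] (ω : S → ℝ) : Prop :=
  (∀ s, 0 < ω s) ∧ ∀ s t, ω (s * t) ≤ ω s * ω t

/-- A characterization of the Beurling algebra `ℓ¹(S, ω)`: a Banach algebra `A`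
together with point masses `delta` and coefficient functionals such that every
element is the ℓ¹-sum of its coefficients against the point masses, with the
weighted ℓ¹-norm, and `delta` is multiplicative (`δ_s * δ_t = δ_{st}`). -/
structure BeurlingStructure (S : Type*) [Mul S] (ω : S → ℝ) (A : Type*)
    [NormedRing A] [NormedAlgebra ℂ A] where
  delta : S → A
  coeff : A →ₗ[ℂ] (S → ℂ)
  delta_mul : ∀ s t : S, delta s * delta t = delta (s * t)
  coeff_delta : ∀ s t : S, coeff (delta s) t = if t = s then 1 else 0
  hasSum_coeff : ∀ a : A, HasSum (fun s => coeff a s • delta s) a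
  norm_eq : ∀ a : A, ‖a‖ = ∑' s, ‖coeff a s‖ * ω s

/-- A pair of commuting continuous left/right module actions of a Banach algebra,
making `E` a Banach `A`-bimodule. -/
def IsBimodule {A : Type*} [NormedRing A] [NormedAlgebra ℂ A]
    {E : Type*} [NormedAddCommGroup E] [NormedSpace ℂ E]
    (l r : A →L[ℂ] E →L[ℂ] E) : Prop :=
  (∀ a b : A, l (a * b) = (l a).comp (l b)) ∧
  (∀ a b : A, r (a * b) = (r b).comp (r a)) ∧
  (∀ a b : A, (l a).comp (r b) = (r b).comp (l a))

/-- Amenability of a Banach algebra: every bounded derivation into the dual of a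
Banach bimodule is inner.  (The dual bimodule actions are `(a·f)(x) = f(x·a)` and
`(f·a)(x) = f(a·x)`.) -/
def IsAmenable (A : Type*) [NormedRing A] [NormedAlgebra ℂ A] : Prop :=
  ∀ (E : Type) [NormedAddCommGroup E] [NormedSpace ℂ E]
    (l r : A →L[ℂ] E →L[ℂ] E), IsBimodule l r →
    ∀ D : A →L[ℂ] (E →L[ℂ] ℂ),
      (∀ a b : A, D (a * b) = (D b).comp (r a) + (D a).comp (l b)) →
      ∃ f : E →L[ℂ] ℂ, ∀ a : A, D a = f.comp (r a) - f.comp (l a)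

/-- The projective tensor norm of an element of the algebraic tensor product. -/
noncomputable def projNorm (A B : Type*) [NormedAddCommGroup A] [NormedSpace ℂ A]
    [NormedAddCommGroup B] [NormedSpace ℂ B] (u : A ⊗[ℂ] B) : ℝ :=
  sInf {r : ℝ | ∃ (n : ℕ) (f : Fin n → A) (g : Fin n → B),
    u = ∑ i, f i ⊗ₜ[ℂ] g i ∧ r = ∑ i, ‖f i‖ * ‖g i‖}

/-- Left action `a • (x ⊗ y) = (a*x) ⊗ y` on `A ⊗ A`. -/
noncomputable def tmulLeft {A : Type*} [NormedRing A] [NormedAlgebra ℂ A] (a : A) :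
    A ⊗[ℂ] A →ₗ[ℂ] A ⊗[ℂ] A :=
  TensorProduct.map (LinearMap.mulLeft ℂ a) LinearMap.id

/-- Right action `(x ⊗ y) • a = x ⊗ (y*a)` on `A ⊗ A`. -/
noncomputable def tmulRight {A : Type*} [NormedRing A] [NormedAlgebra ℂ A] (a : A) :
    A ⊗[ℂ] A →ₗ[ℂ] A ⊗[ℂ] A :=
  TensorProduct.map LinearMap.id (LinearMap.mulRight ℂ a)

/-- Pseudo-amenability: existence of an approximate diagonal.  (Since the algebraic
tensor product is dense in `A ⊗̂ A` in the projective norm, the approximate diagonal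
may be taken in the algebraic tensor product, with the module-action conditions
measured in the projective tensor norm.) -/
def IsPseudoAmenable (A : Type*) [NormedRing A] [NormedAlgebra ℂ A] : Prop :=
  ∃ (ι : Type) (l : Filter ι), l.NeBot ∧ ∃ m : ι → A ⊗[ℂ] A,
    (∀ a : A, Tendsto (fun i => projNorm A A (tmulLeft a (m i) - tmulRight a (m i)))
        l (nhds 0)) ∧
    (∀ a : A, Tendsto (fun i => a * LinearMap.mul' ℂ A (m i)) l (nhds a))

/-- A witness for biprojectivity of `A`: a realization `X` of the completed projective
tensor product `A ⊗̂ A` (with its bimodule actions and multiplication map `pihat`),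
together with a bounded bimodule homomorphism `rho : A → A ⊗̂ A` with `π ∘ ρ = id`. -/
structure BiprojectiveWitness (A : Type*) [NormedRing A] [NormedAlgebra ℂ A] where
  X : Type
  [grp : NormedAddCommGroup X]
  [mod : NormedSpace ℂ X]
  [compl : CompleteSpace X]
  incl : A ⊗[ℂ] A →ₗ[ℂ] X
  dense_incl : DenseRange incl
  norm_incl : ∀ u, ‖incl u‖ = projNorm A A u
  lact : A →L[ℂ] X →L[ℂ] X
  ract : A →L[ℂ] X →L[ℂ] X
  bimod : IsBimodule lact ract
  lact_incl : ∀ (a : A) u, lact a (incl u) = incl (tmulLeft a u)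
  ract_incl : ∀ (a : A) u, ract a (incl u) = incl (tmulRight a u)
  pihat : X →L[ℂ] A
  pihat_incl : ∀ u, pihat (incl u) = LinearMap.mul' ℂ A u
  rho : A →L[ℂ] X
  rho_left : ∀ a b : A, rho (a * b) = lact a (rho b)
  rho_right : ∀ a b : A, rho (a * b) = ract b (rho a)
  pihat_rho : ∀ a : A, pihat (rho a) = a

attribute [instance] BiprojectiveWitness.grp BiprojectiveWitness.mod
  BiprojectiveWitness.compl

/-- `A` is biprojective. -/
def IsBiprojective (A : Type*) [NormedRing A] [NormedAlgebra ℂ A] : Prop :=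
  Nonempty (BiprojectiveWitness A)

/-- A witness for biflatness of `A`: a realization `X` of `A ⊗̂ A` together with a
bounded bimodule homomorphism `rho : A → (A ⊗̂ A)**` with `π** ∘ ρ = k_A`. -/
structure BiflatWitness (A : Type*) [NormedRing A] [NormedAlgebra ℂ A] where
  X : Type
  [grp : NormedAddCommGroup X]
  [mod : NormedSpace ℂ X]
  [compl : CompleteSpace X]
  incl : A ⊗[ℂ] A →ₗ[ℂ] X
  dense_incl : DenseRange incl
  norm_incl : ∀ u, ‖incl u‖ = projNorm A A u
  lact : A →L[ℂ] X →L[ℂ] X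
  ract : A →L[ℂ] X →L[ℂ] X
  bimod : IsBimodule lact ract
  lact_incl : ∀ (a : A) u, lact a (incl u) = incl (tmulLeft a u)
  ract_incl : ∀ (a : A) u, ract a (incl u) = incl (tmulRight a u)
  pihat : X →L[ℂ] A
  pihat_incl : ∀ u, pihat (incl u) = LinearMap.mul' ℂ A u
  rho : A →L[ℂ] ((X →L[ℂ] ℂ) →L[ℂ] ℂ)
  rho_left : ∀ (a b : A) (f : X →L[ℂ] ℂ), rho (a * b) f = rho b (f.comp (lact a))
  rho_right : ∀ (a b : A) (f : X →L[ℂ] ℂ), rho (a * b) f = rho a (f.comp (ract b))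
  pihat_rho : ∀ (a : A) (g : A →L[ℂ] ℂ), rho a (g.comp pihat) = g a

/-- `A` is biflat. -/
def IsBiflat (A : Type*) [NormedRing A] [NormedAlgebra ℂ A] : Prop :=
  Nonempty (BiflatWitness A)

/-- A realization of the completed projective tensor product `A ⊗̂ B` of two Banach
spaces: a Banach space in which the algebraic tensor product sits densely and
isometrically for the projective tensor norm. -/
structure ProjTensorWitness (A B : Type*) [NormedAddCommGroup A] [NormedSpace ℂ A]
    [NormedAddCommGroup B] [NormedSpace ℂ B] where
  X : Type
  [grp : NormedAddCommGroup X]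
  [mod : NormedSpace ℂ X]
  [compl : CompleteSpace X]
  incl : A ⊗[ℂ] B →ₗ[ℂ] X
  dense_incl : DenseRange incl
  norm_incl : ∀ u, ‖incl u‖ = projNorm A B u

attribute [instance] ProjTensorWitness.grp ProjTensorWitness.mod ProjTensorWitness.compl

/-- The principal ideal `S¹ s S¹` generated by `s`, inside the unitization `S¹`. -/
def principalIdeal {S : Type*} [Semigroup S] (s : S) : Set (WithOne S) :=
  {x | ∃ u v : WithOne S, x = u * (s : WithOne S) * v}

/-- The Green-type relation `s τ t ↔ S¹sS¹ = S¹tS¹`. -/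
def bandTau {S : Type*} [Semigroup S] (s t : S) : Prop :=
  principalIdeal s = principalIdeal t

/-- Amenability of a (topological) group: existence of a left-invariant mean on the
bounded continuous functions. -/
def GroupIsAmenable (G : Type*) [Group G] [TopologicalSpace G] [IsTopologicalGroup G] :
    Prop :=
  ∃ m : BoundedContinuousFunction G ℝ →L[ℝ] ℝ,
    m 1 = 1 ∧ (∀ f, 0 ≤ f → 0 ≤ m f) ∧
    ∀ (g : G) (f : BoundedContinuousFunction G ℝ),
      m (f.compContinuous ⟨fun x => g * x, continuous_mul_left g⟩) = m f

/-- A characterization of the Beurling algebra `L¹(G, ω)` of a locally compact group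
with Haar measure `μ`: a Banach algebra `A` whose elements are represented by
`ω`-integrable functions on `G`, with the weighted `L¹` norm and convolution product. -/
structure GroupBeurlingStructure (G : Type*) [Group G] [MeasurableSpace G]
    (μ : MeasureTheory.Measure G) (ω : G → ℝ) (A : Type*) [NormedRing A] [NormedAlgebra ℂ A] where
  toFun : A → G → ℂ
  integrable : ∀ a, MeasureTheory.Integrable (fun g => ‖toFun a g‖ * ω g) μ
  map_add : ∀ a b : A, toFun (a + b) =ᶠ[MeasureTheory.ae μ] toFun a + toFun b
  map_smul : ∀ (c : ℂ) (a : A), toFun (c • a) =ᶠ[MeasureTheory.ae μ] c • toFun a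
  eq_zero : ∀ a : A, toFun a =ᶠ[MeasureTheory.ae μ] 0 → a = 0
  norm_eq : ∀ a : A, ‖a‖ = ∫ g, ‖toFun a g‖ * ω g ∂μ
  map_mul : ∀ a b : A, toFun (a * b) =ᶠ[MeasureTheory.ae μ]
    fun x => ∫ t, toFun a t * toFun b (t⁻¹ * x) ∂μ
  surjective : ∀ f : G → ℂ, Measurable f →
    MeasureTheory.Integrable (fun g => ‖f g‖ * ω g) μ → ∃ a, toFun a =ᶠ[MeasureTheory.ae μ] f


/-! ### Auxiliary lemmas -/

section Aux

lemma tensor_exists_repr {A B : Type*} [NormedAddCommGroup A] [NormedSpace ℂ A]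
    [NormedAddCommGroup B] [NormedSpace ℂ B] (u : A ⊗[ℂ] B) :
    ∃ (n : ℕ) (f : Fin n → A) (g : Fin n → B), u = ∑ i, f i ⊗ₜ[ℂ] g i := by
  induction u with
  | zero => exact ⟨0, fun i => i.elim0, fun i => i.elim0, by simp⟩
  | tmul x y => exact ⟨1, fun _ => x, fun _ => y, by simp⟩
  | add u v hu hv =>
      obtain ⟨n, f, g, hu⟩ := hu
      obtain ⟨m, f', g', hv⟩ := hv
      refine ⟨n + m, Fin.append f f', Fin.append g g', ?_⟩
      rw [Fin.sum_univ_add]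
      simp [Fin.append_left, Fin.append_right, hu, hv]

lemma projNorm_zero {A B : Type*} [NormedAddCommGroup A] [NormedSpace ℂ A]
    [NormedAddCommGroup B] [NormedSpace ℂ B] : projNorm A B (0 : A ⊗[ℂ] B) = 0 := by
  have hmem : (0:ℝ) ∈ {r : ℝ | ∃ (n : ℕ) (f : Fin n → A) (g : Fin n → B),
      (0 : A ⊗[ℂ] B) = ∑ i, f i ⊗ₜ[ℂ] g i ∧ r = ∑ i, ‖f i‖ * ‖g i‖} :=
    ⟨0, fun i => i.elim0, fun i => i.elim0, by simp, by simp⟩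
  have hlb : ∀ r ∈ {r : ℝ | ∃ (n : ℕ) (f : Fin n → A) (g : Fin n → B),
      (0 : A ⊗[ℂ] B) = ∑ i, f i ⊗ₜ[ℂ] g i ∧ r = ∑ i, ‖f i‖ * ‖g i‖}, (0:ℝ) ≤ r := by
    rintro r ⟨n, f, g, -, rfl⟩
    exact Finset.sum_nonneg fun i _ => mul_nonneg (norm_nonneg _) (norm_nonneg _)
  exact le_antisymm (csInf_le ⟨0, hlb⟩ hmem) (le_csInf ⟨0, hmem⟩ hlb)

lemma le_mul_csInf {S : Set ℝ} (hne : S.Nonempty) {C x : ℝ} (hC : 0 ≤ C)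
    (h : ∀ r ∈ S, x ≤ C * r) : x ≤ C * sInf S := by
  rcases hC.eq_or_lt with hC0 | hC0
  · obtain ⟨r, hr⟩ := hne
    have := h r hr
    rw [← hC0] at this ⊢
    simpa using this
  · by_contra hcon
    push_neg at hcon
    have h1 : sInf S < x / C := by
      rw [lt_div_iff₀ hC0]
      linarith [hcon]
    obtain ⟨r, hrS, hr⟩ := exists_lt_of_csInf_lt hne h1
    have := h r hrS
    have h2 : C * r < x := by
      calc C * r < C * (x / C) := by exact (mul_lt_mul_iff_right₀ hC0).mpr hr
        _ = x := by field_simp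
    linarith

lemma norm_le_projNorm {A B : Type*} [NormedAddCommGroup A] [NormedSpace ℂ A]
    [NormedAddCommGroup B] [NormedSpace ℂ B] (F : A ⊗[ℂ] B →ₗ[ℂ] ℂ) (C : ℝ)
    (hC : 0 ≤ C) (hF : ∀ x y, ‖F (x ⊗ₜ[ℂ] y)‖ ≤ C * (‖x‖ * ‖y‖)) (u : A ⊗[ℂ] B) :
    ‖F u‖ ≤ C * projNorm A B u := by
  apply le_mul_csInf _ hC
  · rintro r ⟨n, f, g, rfl, rfl⟩
    rw [map_sum, Finset.mul_sum]
    exact (norm_sum_le _ _).trans (Finset.sum_le_sum fun i _ => hF (f i) (g i))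
  · obtain ⟨n, f, g, hu⟩ := tensor_exists_repr u
    exact ⟨∑ i, ‖f i‖ * ‖g i‖, n, f, g, hu, rfl⟩

lemma aux_chi {S : Type} [Mul S] {ω : S → ℝ} (hω : IsWeight ω) {A : Type}
    [NormedRing A] [NormedAlgebra ℂ A] (B : BeurlingStructure S ω A) (u : S) :
    ∃ χ : A →L[ℂ] ℂ, ∀ a, χ a = B.coeff a u := by
  have hb : ∀ a : A, ‖((LinearMap.proj u).comp B.coeff) a‖ ≤ (ω u)⁻¹ * ‖a‖ := by
    intro a
    by_cases hsumm : Summable (fun s => ‖B.coeff a s‖ * ω s)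
    · have h1 : ‖B.coeff a u‖ * ω u ≤ ‖a‖ := by
        rw [B.norm_eq a]
        exact Summable.le_tsum hsumm u (fun s _ => mul_nonneg (norm_nonneg _) (hω.1 s).le)
      have hωu := hω.1 u
      have : ‖B.coeff a u‖ ≤ ‖a‖ / ω u := (le_div_iff₀ hωu).mpr h1
      simpa [div_eq_inv_mul] using this
    · have h0 : ‖a‖ = 0 := by
        rw [B.norm_eq a, tsum_eq_zero_of_not_summable hsumm]
      have ha : a = 0 := norm_eq_zero.mp h0
      simp [ha]
  exact ⟨LinearMap.mkContinuous _ ((ω u)⁻¹) hb, fun a => rfl⟩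

lemma aux_lam_left {S : Type} [Mul S] [Nonempty S] {ω : S → ℝ} (hω : IsWeight ω)
    (hL : ∀ s t : S, s * t = s) {A : Type}
    [NormedRing A] [NormedAlgebra ℂ A] (B : BeurlingStructure S ω A) :
    ∃ lam : A →L[ℂ] ℂ, (∀ a b : A, a * b = lam b • a) ∧ (∀ u : S, lam (B.delta u) = 1) := by
  obtain ⟨chi, hchi⟩ := aux_chi hω B (Classical.arbitrary S)
  set s₀ := Classical.arbitrary S
  have hchid : chi (B.delta s₀) = 1 := by rw [hchi, B.coeff_delta]; simp
  have L1 : ∀ (v : S) (b : A), HasSum (fun t => B.coeff b t • B.delta v) (B.delta v * b) := by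
    intro v b
    have h := (ContinuousLinearMap.mul ℂ A (B.delta v)).hasSum (B.hasSum_coeff b)
    simpa only [ContinuousLinearMap.mul_apply', mul_smul_comm, B.delta_mul, hL] using h
  refine ⟨chi.comp (ContinuousLinearMap.mul ℂ A (B.delta s₀)), ?_, ?_⟩
  · intro a b
    set lam := chi.comp (ContinuousLinearMap.mul ℂ A (B.delta s₀)) with hlam
    have L2 : HasSum (fun t => B.coeff b t) (lam b) := by
      have h := chi.hasSum (L1 s₀ b)
      simpa only [map_smul, smul_eq_mul, hchid, mul_one, hlam, ContinuousLinearMap.comp_apply,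
        ContinuousLinearMap.mul_apply'] using h
    have L3 : ∀ v : S, B.delta v * b = lam b • B.delta v := fun v =>
      (L1 v b).unique (L2.smul_const _)
    have h4 := ((ContinuousLinearMap.mul ℂ A).flip b).hasSum (B.hasSum_coeff a)
    simp only [ContinuousLinearMap.flip_apply, ContinuousLinearMap.mul_apply',
      smul_mul_assoc] at h4
    have h5 : HasSum (fun v => B.coeff a v • (B.delta v * b)) (lam b • a) := by
      have := (B.hasSum_coeff a).const_smul (lam b)
      simp only [L3]
      simpa only [smul_comm (lam b)] using this
    exact h4.unique h5
  · intro v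
    show chi (B.delta s₀ * B.delta v) = 1
    rw [B.delta_mul, hL, hchid]

lemma aux_lam_right {S : Type} [Mul S] [Nonempty S] {ω : S → ℝ} (hω : IsWeight ω)
    (hR : ∀ s t : S, s * t = t) {A : Type}
    [NormedRing A] [NormedAlgebra ℂ A] (B : BeurlingStructure S ω A) :
    ∃ lam : A →L[ℂ] ℂ, (∀ a b : A, a * b = lam a • b) ∧ (∀ u : S, lam (B.delta u) = 1) := by
  obtain ⟨chi, hchi⟩ := aux_chi hω B (Classical.arbitrary S)
  set s₀ := Classical.arbitrary S
  have hchid : chi (B.delta s₀) = 1 := by rw [hchi, B.coeff_delta]; simp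
  have R1 : ∀ (v : S) (b : A), HasSum (fun t => B.coeff b t • B.delta v) (b * B.delta v) := by
    intro v b
    have h := ((ContinuousLinearMap.mul ℂ A).flip (B.delta v)).hasSum (B.hasSum_coeff b)
    simpa only [ContinuousLinearMap.flip_apply, ContinuousLinearMap.mul_apply',
      smul_mul_assoc, B.delta_mul, hR] using h
  refine ⟨chi.comp ((ContinuousLinearMap.mul ℂ A).flip (B.delta s₀)), ?_, ?_⟩
  · intro a b
    set lam := chi.comp ((ContinuousLinearMap.mul ℂ A).flip (B.delta s₀)) with hlam
    have R2 : HasSum (fun t => B.coeff a t) (lam a) := by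
      have h := chi.hasSum (R1 s₀ a)
      simpa only [map_smul, smul_eq_mul, hchid, mul_one, hlam, ContinuousLinearMap.comp_apply,
        ContinuousLinearMap.flip_apply, ContinuousLinearMap.mul_apply'] using h
    have R3 : ∀ v : S, a * B.delta v = lam a • B.delta v := fun v =>
      (R1 v a).unique (R2.smul_const _)
    have h4 := (ContinuousLinearMap.mul ℂ A a).hasSum (B.hasSum_coeff b)
    simp only [ContinuousLinearMap.mul_apply', mul_smul_comm] at h4
    have h5 : HasSum (fun v => B.coeff b v • (a * B.delta v)) (lam a • b) := by
      have := (B.hasSum_coeff b).const_smul (lam a)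
      simp only [R3]
      simpa only [smul_comm (lam a)] using this
    exact h4.unique h5
  · intro v
    show chi (B.delta v * B.delta s₀) = 1
    rw [B.delta_mul, hR, hchid]

lemma aux_F {A : Type} [NormedRing A] [NormedAlgebra ℂ A] (φ ψ : A →L[ℂ] ℂ) :
    ∃ F : A ⊗[ℂ] A →ₗ[ℂ] ℂ, (∀ x y : A, F (x ⊗ₜ[ℂ] y) = φ x * ψ y) ∧
      ∀ u, ‖F u‖ ≤ (‖φ‖ * ‖ψ‖) * projNorm A A u := by
  refine ⟨TensorProduct.lift (LinearMap.mk₂ ℂ (fun x y => φ x * ψ y)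
    (fun x x' y => by simp [add_mul]) (fun c x y => by simp [smul_eq_mul]; ring)
    (fun x y y' => by simp [mul_add]) (fun c x y => by simp [smul_eq_mul]; ring)),
    fun x y => by simp, ?_⟩
  apply norm_le_projNorm _ _ (mul_nonneg (norm_nonneg _) (norm_nonneg _))
  intro x y
  simp only [TensorProduct.lift.tmul, LinearMap.mk₂_apply, norm_mul]
  calc ‖φ x‖ * ‖ψ y‖ ≤ (‖φ‖ * ‖x‖) * (‖ψ‖ * ‖y‖) :=
        mul_le_mul (φ.le_opNorm x) (ψ.le_opNorm y) (norm_nonneg _)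
          (mul_nonneg (norm_nonneg _) (norm_nonneg _))
    _ = ‖φ‖ * ‖ψ‖ * (‖x‖ * ‖y‖) := by ring

end Aux

/-- For a right zero (or left zero) semigroup `S` with weight `ω`, TFAE:
(i) `ℓ¹(S,ω)` is pseudo-amenable; (ii) `S` is a singleton; (iii) `ℓ¹(S,ω)` is
amenable. -/
theorem stmt16 (S : Type) [Mul S] [Nonempty S]
    (hS : (∀ s t : S, s * t = t) ∨ (∀ s t : S, s * t = s))
    (ω : S → ℝ) (hω : IsWeight ω)
    (A : Type) [NormedRing A] [NormedAlgebra ℂ A] [CompleteSpace A]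
    (B : BeurlingStructure S ω A) :
    List.TFAE [IsPseudoAmenable A, Subsingleton S, IsAmenable A] := by
  have hne_pair : ¬ Subsingleton S → ∃ s t : S, s ≠ t := by
    intro hns
    by_contra h
    push_neg at h
    exact hns ⟨h⟩
  tfae_have 2 → 1 := by
    intro hsub
    have s₀ : S := Classical.arbitrary S
    set e := B.delta s₀ with he
    have hdelta : ∀ s : S, B.delta s = e := fun s => by
      rw [he]; congr 1; exact Subsingleton.elim _ _
    have hmulee : ∀ s u : S, B.delta s * B.delta u = B.delta s := by
      intro s u; rw [B.delta_mul]; congr 1; exact Subsingleton.elim _ _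
    have hae : ∀ a : A, a * e = a := by
      intro a
      have h := ((ContinuousLinearMap.mul ℂ A).flip e).hasSum (B.hasSum_coeff a)
      simp only [ContinuousLinearMap.flip_apply, ContinuousLinearMap.mul_apply',
        smul_mul_assoc, he, hmulee] at h
      exact h.unique (B.hasSum_coeff a)
    have hea : ∀ a : A, e * a = a := by
      intro a
      have h := (ContinuousLinearMap.mul ℂ A e).hasSum (B.hasSum_coeff a)
      have h2 : ∀ u : S, e * B.delta u = B.delta u := by
        intro u; rw [hdelta u, he, hmulee]
      simp only [ContinuousLinearMap.mul_apply', mul_smul_comm, h2] at h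
      exact h.unique (B.hasSum_coeff a)
    have hrep : ∀ a : A, a = B.coeff a s₀ • e := by
      intro a
      have h := hasSum_single (f := fun s => B.coeff a s • B.delta s) s₀
        (fun s hs => absurd (Subsingleton.elim s s₀) hs)
      exact (B.hasSum_coeff a).unique h
    refine ⟨Unit, pure (), Filter.pure_neBot, fun _ => e ⊗ₜ[ℂ] e, ?_, ?_⟩
    · intro a
      have hdiff : tmulLeft a (e ⊗ₜ[ℂ] e) - tmulRight a (e ⊗ₜ[ℂ] e) = 0 := by
        simp only [tmulLeft, tmulRight, TensorProduct.map_tmul, LinearMap.mulLeft_apply,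
          LinearMap.mulRight_apply, LinearMap.id_coe, id_eq, hae, hea]
        rw [hrep a]
        rw [TensorProduct.smul_tmul, sub_self]
      simp only [hdiff, projNorm_zero]
      exact tendsto_const_nhds
    · intro a
      have : a * LinearMap.mul' ℂ A (e ⊗ₜ[ℂ] e) = a := by
        rw [LinearMap.mul'_apply, hae e, hae a]
      simp only [this]
      exact tendsto_const_nhds
  tfae_have 2 → 3 := by
    intro hsub
    intro E _ _ l r hbim D hD
    obtain ⟨hl, hr, hc⟩ := hbim
    have s₀ : S := Classical.arbitrary S
    set e := B.delta s₀ with he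
    have hee : e * e = e := by rw [he, B.delta_mul]; congr 1; exact Subsingleton.elim _ _
    have hrep : ∀ a : A, ∃ c : ℂ, a = c • e := by
      intro a
      have h := hasSum_single (f := fun s => B.coeff a s • B.delta s) s₀
        (fun s hs => absurd (Subsingleton.elim s s₀) hs)
      exact ⟨B.coeff a s₀, (B.hasSum_coeff a).unique h⟩
    refine ⟨(D e).comp (r e) - (D e).comp (l e), fun a => ?_⟩
    have hDe : ∀ x : E, D e x = D e (r e x) + D e (l e x) := by
      intro x
      have h := hD e e
      rw [hee] at h
      simpa using DFunLike.congr_fun h x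
    have hre : ∀ x : E, r e (r e x) = r e x := by
      intro x
      have h := hr e e
      rw [hee] at h
      simpa using (DFunLike.congr_fun h x).symm
    have hle : ∀ x : E, l e (l e x) = l e x := by
      intro x
      have h := hl e e
      rw [hee] at h
      simpa using (DFunLike.congr_fun h x).symm
    have hcom : ∀ x : E, l e (r e x) = r e (l e x) := by
      intro x
      simpa using DFunLike.congr_fun (hc e e) x
    have hz1 : ∀ x : E, D e (l e (r e x)) = 0 := by
      intro x
      have h1 := hDe (r e x)
      rw [hre x] at h1
      exact (left_eq_add.mp h1)
    have hz2 : ∀ x : E, D e (r e (l e x)) = 0 := by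
      intro x
      rw [← hcom x]
      exact hz1 x
    obtain ⟨c, rfl⟩ := hrep a
    ext x
    simp only [ContinuousLinearMap.sub_apply, ContinuousLinearMap.comp_apply,
      map_smul, ContinuousLinearMap.smul_apply]
    rw [← smul_sub]
    congr 1
    rw [hre x, hle x, hz1 x, hz2 x, hDe x]
    ring
  tfae_have 1 → 2 := by
    rintro ⟨ι, lfil, hne, m, h1, h2⟩
    by_contra hns
    obtain ⟨s, t, hst⟩ := hne_pair hns
    haveI := hne
    rcases hS with hR | hL
    · -- right zero: s * t = t
      have hdl : ∀ (u : S) (b : A), B.delta u * b = b := by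
        intro u b
        have h := (ContinuousLinearMap.mul ℂ A (B.delta u)).hasSum (B.hasSum_coeff b)
        simp only [ContinuousLinearMap.mul_apply', mul_smul_comm, B.delta_mul, hR] at h
        exact h.unique (B.hasSum_coeff b)
      have hs := h2 (B.delta s)
      have ht := h2 (B.delta t)
      simp only [hdl] at hs ht
      have heq := tendsto_nhds_unique hs ht
      have hco := congrArg (fun x => B.coeff x s) heq
      simp [B.coeff_delta, hst] at hco
    · -- left zero: s * t = s
      obtain ⟨lam, hlam, hlam1⟩ := aux_lam_left hω hL B
      obtain ⟨chi, hchi⟩ := aux_chi hω B s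
      have hchis : chi (B.delta s) = 1 := by rw [hchi, B.coeff_delta]; simp
      have hchit : chi (B.delta t) = 0 := by rw [hchi, B.coeff_delta]; simp [hst]
      obtain ⟨Fll, hFll, hFllb⟩ := aux_F lam lam
      obtain ⟨Fsl, hFsl, hFslb⟩ := aux_F chi lam
      have hmul' : ∀ u : A ⊗[ℂ] A, B.delta s * LinearMap.mul' ℂ A u = Fll u • B.delta s := by
        intro u
        rw [hlam]
        congr 1
        induction u with
        | zero => simp
        | tmul x y =>
            rw [LinearMap.mul'_apply, hlam x y, map_smul, hFll, smul_eq_mul, mul_comm]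
        | add u v hu hv => rw [map_add, map_add, map_add, hu, hv]
      have T1 : Tendsto (fun i => Fll (m i)) lfil (nhds 1) := by
        have h := h2 (B.delta s)
        simp only [hmul'] at h
        have h' := (chi.continuous.tendsto (B.delta s)).comp h
        simp only [Function.comp_def, map_smul, smul_eq_mul, hchis, mul_one] at h'
        exact h'
      set a := B.delta s - B.delta t with hadef
      have hlama : lam a = 0 := by
        rw [hadef, map_sub, hlam1, hlam1, sub_self]
      have hchia : chi a = 1 := by
        rw [hadef, map_sub, hchis, hchit, sub_zero]
      have keyL : ∀ u : A ⊗[ℂ] A, Fsl (tmulLeft a u) = Fll u := by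
        intro u
        induction u with
        | zero => simp [tmulLeft]
        | tmul x y =>
            simp only [tmulLeft, TensorProduct.map_tmul, LinearMap.mulLeft_apply,
              LinearMap.id_coe, id_eq]
            rw [hFsl, hFll, hlam a x, map_smul, smul_eq_mul, hchia]
            ring
        | add u v hu hv =>
            simp only [tmulLeft] at hu hv ⊢
            rw [map_add, map_add, map_add, hu, hv]
      have keyR : ∀ u : A ⊗[ℂ] A, Fsl (tmulRight a u) = 0 := by
        intro u
        induction u with
        | zero => simp [tmulRight]
        | tmul x y =>
            simp only [tmulRight, TensorProduct.map_tmul, LinearMap.mulRight_apply,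
              LinearMap.id_coe, id_eq]
            rw [hFsl, hlam y a, map_smul, smul_eq_mul, hlama]
            ring
        | add u v hu hv =>
            simp only [tmulRight] at hu hv ⊢
            rw [map_add, map_add, hu, hv, add_zero]
      have T0 : Tendsto (fun i => Fll (m i)) lfil (nhds 0) := by
        have hsq : ∀ i, ‖Fll (m i)‖ ≤
            ‖chi‖ * ‖lam‖ * projNorm A A (tmulLeft a (m i) - tmulRight a (m i)) := by
          intro i
          have hb := hFslb (tmulLeft a (m i) - tmulRight a (m i))
          rwa [map_sub, keyL, keyR, sub_zero] at hb
        have hlim : Tendsto (fun i =>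
            ‖chi‖ * ‖lam‖ * projNorm A A (tmulLeft a (m i) - tmulRight a (m i)))
            lfil (nhds 0) := by
          have := (h1 a).const_mul (‖chi‖ * ‖lam‖)
          simpa using this
        exact squeeze_zero_norm hsq hlim
      exact one_ne_zero (tendsto_nhds_unique T1 T0)
  tfae_have 3 → 2 := by
    intro ham
    by_contra hns
    obtain ⟨s, t, hst⟩ := hne_pair hns
    obtain ⟨chi, hchi⟩ := aux_chi hω B s
    have hchis : chi (B.delta s) = 1 := by rw [hchi, B.coeff_delta]; simp
    have hchit : chi (B.delta t) = 0 := by rw [hchi, B.coeff_delta]; simp [hst]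
    set Did := ContinuousLinearMap.id ℂ ℂ with hDid
    set D := chi.smulRight Did with hDdef
    rcases hS with hR | hL
    · -- right zero: a * b = lam a • b ; take l = 0, r a = lam a • id
      obtain ⟨lam, hlam, hlam1⟩ := aux_lam_right hω hR B
      set r := lam.smulRight Did with hrdef
      have hbim : IsBimodule (0 : A →L[ℂ] ℂ →L[ℂ] ℂ) r := by
        refine ⟨fun a b => by simp, fun a b => ?_, fun a b => by ext z; simp⟩
        ext z
        simp only [hrdef, ContinuousLinearMap.smulRight_apply, ContinuousLinearMap.comp_apply,
          ContinuousLinearMap.smul_apply, hDid, ContinuousLinearMap.id_apply, smul_eq_mul]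
        rw [hlam a b, map_smul, smul_eq_mul]
        ring
      have hder : ∀ a b : A, D (a * b) =
          (D b).comp (r a) + (D a).comp ((0 : A →L[ℂ] ℂ →L[ℂ] ℂ) b) := by
        intro a b
        ext z
        simp only [hDdef, hrdef, ContinuousLinearMap.smulRight_apply,
          ContinuousLinearMap.add_apply, ContinuousLinearMap.comp_apply,
          ContinuousLinearMap.smul_apply, ContinuousLinearMap.zero_apply, hDid,
          ContinuousLinearMap.id_apply, smul_eq_mul, map_zero, mul_zero, add_zero]
        rw [hlam a b, map_smul, smul_eq_mul]
        ring
      obtain ⟨f, hf⟩ := ham ℂ 0 r hbim D hder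
      have h1 := DFunLike.congr_fun (hf (B.delta s)) 1
      have h2 := DFunLike.congr_fun (hf (B.delta t)) 1
      simp only [hDdef, hrdef, ContinuousLinearMap.smulRight_apply,
        ContinuousLinearMap.sub_apply, ContinuousLinearMap.comp_apply,
        ContinuousLinearMap.smul_apply, ContinuousLinearMap.zero_apply, hDid,
        ContinuousLinearMap.id_apply, smul_eq_mul, map_zero, sub_zero, mul_one,
        one_mul, hchis, hchit, hlam1] at h1 h2
      exact one_ne_zero (h1.trans h2.symm)
    · -- left zero: a * b = lam b • a ; take l a = lam a • id, r = 0
      obtain ⟨lam, hlam, hlam1⟩ := aux_lam_left hω hL B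
      set l := lam.smulRight Did with hldef
      have hbim : IsBimodule l (0 : A →L[ℂ] ℂ →L[ℂ] ℂ) := by
        refine ⟨fun a b => ?_, fun a b => by simp, fun a b => by ext z; simp⟩
        ext z
        simp only [hldef, ContinuousLinearMap.smulRight_apply, ContinuousLinearMap.comp_apply,
          ContinuousLinearMap.smul_apply, hDid, ContinuousLinearMap.id_apply, smul_eq_mul]
        rw [hlam a b, map_smul, smul_eq_mul]
        ring
      have hder : ∀ a b : A, D (a * b) =
          (D b).comp ((0 : A →L[ℂ] ℂ →L[ℂ] ℂ) a) + (D a).comp (l b) := by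
        intro a b
        ext z
        simp only [hDdef, hldef, ContinuousLinearMap.smulRight_apply,
          ContinuousLinearMap.add_apply, ContinuousLinearMap.comp_apply,
          ContinuousLinearMap.smul_apply, ContinuousLinearMap.zero_apply, hDid,
          ContinuousLinearMap.id_apply, smul_eq_mul, map_zero, zero_add]
        rw [hlam a b, map_smul, smul_eq_mul]
        ring
      obtain ⟨f, hf⟩ := ham ℂ l 0 hbim D hder
      have h1 := DFunLike.congr_fun (hf (B.delta s)) 1
      have h2 := DFunLike.congr_fun (hf (B.delta t)) 1
      simp only [hDdef, hldef, ContinuousLinearMap.smulRight_apply,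
        ContinuousLinearMap.sub_apply, ContinuousLinearMap.comp_apply,
        ContinuousLinearMap.smul_apply, ContinuousLinearMap.zero_apply, hDid,
        ContinuousLinearMap.id_apply, smul_eq_mul, map_zero, zero_sub, mul_one,
        one_mul, hchis, hchit, hlam1] at h1 h2
      exact one_ne_zero (h1.trans h2.symm)
  tfae_finish
end

section
/- Let S be a left cancellative semigroup and ω a weight on S. If ℓ¹(S, ω) is pseudo-amenable, then S is a group. -/
open scoped TensorProduct
open Filter
open scoped Classical

set_option linter.unusedSectionVars false
set_option linter.unusedVariables false
namespace Stmt17Aux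

open Filter
open scoped TensorProduct

variable {S : Type} [Semigroup S] {ω : S → ℝ}
variable {A : Type} [NormedRing A] [NormedAlgebra ℂ A] [CompleteSpace A]
variable (B : BeurlingStructure S ω A)

lemma summable_coeff (hω : IsWeight ω) (a : A) :
    Summable (fun s => ‖B.coeff a s‖ * ω s) := by
  by_contra h
  have h0 : ‖a‖ = 0 := by rw [B.norm_eq]; exact tsum_eq_zero_of_not_summable h
  have ha : a = 0 := norm_eq_zero.mp h0
  subst ha
  refine h ?_
  have he : (fun s => ‖B.coeff (0 : A) s‖ * ω s) = fun _ => (0 : ℝ) := by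
    funext s; simp
  rw [he]
  exact summable_zero

lemma coeff_le (hω : IsWeight ω) (a : A) (x : S) : ‖B.coeff a x‖ * ω x ≤ ‖a‖ := by
  rw [B.norm_eq]
  exact Summable.le_tsum (summable_coeff B hω a) x
    (fun j _ => mul_nonneg (norm_nonneg _) (hω.1 j).le)

noncomputable def coeffL (hω : IsWeight ω) (x : S) : A →L[ℂ] ℂ :=
  LinearMap.mkContinuous ((LinearMap.proj x).comp B.coeff) (ω x)⁻¹ fun a => by
    have h := coeff_le B hω a x
    have hx := hω.1 x
    show ‖B.coeff a x‖ ≤ (ω x)⁻¹ * ‖a‖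
    rw [inv_mul_eq_div, le_div_iff₀ hx]
    exact h

@[simp] lemma coeffL_apply (hω : IsWeight ω) (x : S) (a : A) :
    coeffL B hω x a = B.coeff a x := rfl

lemma hasSum_mulLeft (c a : A) :
    HasSum (fun u => B.coeff a u • (c * B.delta u)) (c * a) := by
  have h := (B.hasSum_coeff a).mapL (ContinuousLinearMap.mul ℂ A c)
  simpa [mul_smul_comm] using h

lemma hasSum_mulRight (c a : A) :
    HasSum (fun u => B.coeff a u • (B.delta u * c)) (a * c) := by
  have h := (B.hasSum_coeff a).mapL ((ContinuousLinearMap.mul ℂ A).flip c)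
  simpa [smul_mul_assoc] using h

lemma hasSum_coeff_mulLeft (hω : IsWeight ω) (c a : A) (x : S) :
    HasSum (fun u => B.coeff a u * B.coeff (c * B.delta u) x) (B.coeff (c * a) x) := by
  have h := (hasSum_mulLeft B c a).mapL (coeffL B hω x)
  simpa [smul_eq_mul] using h

lemma hasSum_coeff_mulRight (hω : IsWeight ω) (c a : A) (x : S) :
    HasSum (fun u => B.coeff a u * B.coeff (B.delta u * c) x) (B.coeff (a * c) x) := by
  have h := (hasSum_mulRight B c a).mapL (coeffL B hω x)
  simpa [smul_eq_mul] using h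

lemma coeff_deltaMulDelta (hcanc : ∀ a b c : S, a * b = a * c → b = c)
    (hω : IsWeight ω) (s u : S) (a : A) :
    B.coeff (B.delta s * a) (s * u) = B.coeff a u := by
  have h := hasSum_coeff_mulLeft B hω (B.delta s) a (s * u)
  have he : (fun u' => B.coeff a u' * B.coeff (B.delta s * B.delta u') (s * u))
      = fun u' => if u' = u then B.coeff a u else 0 := by
    funext u'
    rw [B.delta_mul, B.coeff_delta]
    by_cases hc : u' = u
    · subst hc; simp
    · rw [if_neg, mul_zero, if_neg hc]
      intro hcc
      exact hc ((hcanc s u u' hcc).symm)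
  rw [he] at h
  exact h.unique (hasSum_ite_eq u (B.coeff a u))

lemma coeff_deltaMul_zero (hω : IsWeight ω) (s x : S) (hx : ∀ u, x ≠ s * u) (a : A) :
    B.coeff (B.delta s * a) x = 0 := by
  have h := hasSum_coeff_mulLeft B hω (B.delta s) a x
  have he : (fun u' => B.coeff a u' * B.coeff (B.delta s * B.delta u') x)
      = fun _ => (0 : ℂ) := by
    funext u'
    rw [B.delta_mul, B.coeff_delta, if_neg (hx u'), mul_zero]
  rw [he] at h
  exact h.unique hasSum_zero

lemma coeff_mulDelta_zero (hω : IsWeight ω) (s x : S) (hx : ∀ v, x ≠ v * s) (a : A) :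
    B.coeff (a * B.delta s) x = 0 := by
  have h := hasSum_coeff_mulRight B hω (B.delta s) a x
  have he : (fun v => B.coeff a v * B.coeff (B.delta v * B.delta s) x)
      = fun _ => (0 : ℂ) := by
    funext v
    rw [B.delta_mul, B.coeff_delta, if_neg (hx v), mul_zero]
  rw [he] at h
  exact h.unique hasSum_zero

noncomputable def Cmap : A ⊗[ℂ] A →ₗ[ℂ] (S × S → ℂ) :=
  TensorProduct.lift (LinearMap.mk₂ ℂ (fun a b => fun p => B.coeff a p.1 * B.coeff b p.2)
    (fun a a' b => by funext p; simp [add_mul])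
    (fun c a b => by funext p; simp [mul_assoc])
    (fun a b b' => by funext p; simp [mul_add])
    (fun c a b => by funext p; simp; ring))

@[simp] lemma Cmap_tmul (a b : A) (p : S × S) :
    Cmap B (a ⊗ₜ[ℂ] b) p = B.coeff a p.1 * B.coeff b p.2 := rfl

lemma exists_rep (m : A ⊗[ℂ] A) :
    ∃ (n : ℕ) (f g : Fin n → A), m = ∑ i, f i ⊗ₜ[ℂ] g i := by
  induction m using TensorProduct.induction_on with
  | zero => exact ⟨0, ![], ![], by simp⟩
  | tmul a b => exact ⟨1, fun _ => a, fun _ => b, by simp⟩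
  | add x y hx hy =>
    obtain ⟨n, f, g, rfl⟩ := hx
    obtain ⟨k, f', g', rfl⟩ := hy
    refine ⟨n + k, Fin.append f f', Fin.append g g', ?_⟩
    rw [Fin.sum_univ_add]
    simp

lemma master (hω : IsWeight ω) (m : A ⊗[ℂ] A) :
    Summable (fun p : S × S => ‖Cmap B m p‖ * (ω p.1 * ω p.2)) ∧
    ∑' p : S × S, ‖Cmap B m p‖ * (ω p.1 * ω p.2) ≤ projNorm A A m := by
  have key : ∀ (n : ℕ) (f g : Fin n → A), m = ∑ i, f i ⊗ₜ[ℂ] g i →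
      Summable (fun p : S × S => ‖Cmap B m p‖ * (ω p.1 * ω p.2)) ∧
      ∑' p : S × S, ‖Cmap B m p‖ * (ω p.1 * ω p.2) ≤ ∑ i, ‖f i‖ * ‖g i‖ := by
    intro n f g hrep
    set F : Fin n → S × S → ℝ := fun i p =>
      (‖B.coeff (f i) p.1‖ * ω p.1) * (‖B.coeff (g i) p.2‖ * ω p.2) with hF
    have hFs : ∀ i, Summable (F i) := fun i =>
      (summable_coeff B hω (f i)).mul_of_nonneg (summable_coeff B hω (g i))
        (fun x => mul_nonneg (norm_nonneg _) (hω.1 x).le)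
        (fun x => mul_nonneg (norm_nonneg _) (hω.1 x).le)
    have hFt : ∀ i, ∑' p : S × S, F i p = ‖f i‖ * ‖g i‖ := by
      intro i
      have hna : Summable (fun u => ‖‖B.coeff (f i) u‖ * ω u‖) :=
        (summable_coeff B hω (f i)).congr (fun u =>
          (Real.norm_of_nonneg (mul_nonneg (norm_nonneg _) (hω.1 u).le)).symm)
      have hnb : Summable (fun u => ‖‖B.coeff (g i) u‖ * ω u‖) :=
        (summable_coeff B hω (g i)).congr (fun u =>
          (Real.norm_of_nonneg (mul_nonneg (norm_nonneg _) (hω.1 u).le)).symm)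
      rw [hF]
      rw [← tsum_mul_tsum_of_summable_norm hna hnb, ← B.norm_eq, ← B.norm_eq]
    have hCm : ∀ p : S × S, Cmap B m p = ∑ i, B.coeff (f i) p.1 * B.coeff (g i) p.2 := by
      intro p
      rw [hrep, map_sum]
      simp
    have hpt : ∀ p : S × S, ‖Cmap B m p‖ * (ω p.1 * ω p.2) ≤ ∑ i, F i p := by
      intro p
      calc ‖Cmap B m p‖ * (ω p.1 * ω p.2)
          ≤ (∑ i, ‖B.coeff (f i) p.1 * B.coeff (g i) p.2‖) * (ω p.1 * ω p.2) := by
            apply mul_le_mul_of_nonneg_right _ (mul_nonneg (hω.1 _).le (hω.1 _).le)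
            rw [hCm p]
            exact norm_sum_le _ _
        _ = ∑ i, F i p := by
            rw [Finset.sum_mul]
            refine Finset.sum_congr rfl fun i _ => ?_
            rw [norm_mul, hF]
            ring
    have hsum2 : Summable (fun p : S × S => ∑ i, F i p) :=
      summable_sum (fun i _ => hFs i)
    have hsle : Summable (fun p : S × S => ‖Cmap B m p‖ * (ω p.1 * ω p.2)) :=
      Summable.of_nonneg_of_le
        (fun p => mul_nonneg (norm_nonneg _) (mul_nonneg (hω.1 _).le (hω.1 _).le))
        hpt hsum2
    refine ⟨hsle, ?_⟩
    calc ∑' p : S × S, ‖Cmap B m p‖ * (ω p.1 * ω p.2)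
        ≤ ∑' p : S × S, ∑ i, F i p := Summable.tsum_le_tsum hpt hsle hsum2
      _ = ∑ i, ∑' p : S × S, F i p := Summable.tsum_finsetSum (fun i _ => hFs i)
      _ = ∑ i, ‖f i‖ * ‖g i‖ := Finset.sum_congr rfl fun i _ => hFt i
  obtain ⟨n, f, g, hrep⟩ := exists_rep m
  refine ⟨(key n f g hrep).1, ?_⟩
  refine le_csInf ⟨∑ i, ‖f i‖ * ‖g i‖, ⟨n, f, g, hrep, rfl⟩⟩ ?_
  rintro r ⟨n', f', g', hrep', rfl⟩
  exact (key n' f' g' hrep').2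

lemma summable_chi (hω : IsWeight ω) (x : S) (m : A ⊗[ℂ] A) :
    Summable (fun p : S × S => ‖Cmap B m p * (if x = p.1 * p.2 then (1 : ℂ) else 0)‖) := by
  apply Summable.of_nonneg_of_le (fun _ => norm_nonneg _) ?_
    (((master B hω m).1).mul_right (ω x)⁻¹)
  intro p
  by_cases hc : x = p.1 * p.2
  · rw [if_pos hc, mul_one]
    have h1 : (1 : ℝ) ≤ (ω p.1 * ω p.2) * (ω x)⁻¹ := by
      rw [← div_eq_mul_inv, le_div_iff₀ (hω.1 x), one_mul]
      calc ω x = ω (p.1 * p.2) := by rw [hc]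
        _ ≤ ω p.1 * ω p.2 := hω.2 _ _
    calc ‖Cmap B m p‖ = ‖Cmap B m p‖ * 1 := (mul_one _).symm
      _ ≤ ‖Cmap B m p‖ * ((ω p.1 * ω p.2) * (ω x)⁻¹) :=
          mul_le_mul_of_nonneg_left h1 (norm_nonneg _)
      _ = ‖Cmap B m p‖ * (ω p.1 * ω p.2) * (ω x)⁻¹ := by ring
  · rw [if_neg hc, mul_zero, norm_zero]
    exact mul_nonneg (mul_nonneg (norm_nonneg _)
      (mul_nonneg (hω.1 _).le (hω.1 _).le)) (inv_nonneg.mpr (hω.1 x).le)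

lemma coeff_pi (hω : IsWeight ω) (x : S) (m : A ⊗[ℂ] A) :
    B.coeff (LinearMap.mul' ℂ A m) x
      = ∑' p : S × S, Cmap B m p * (if x = p.1 * p.2 then 1 else 0) := by
  induction m using TensorProduct.induction_on with
  | zero => simp
  | tmul a b =>
    have hmain := hasSum_coeff_mulRight B hω b a x
    have hsum : Summable (fun p : S × S =>
        Cmap B (a ⊗ₜ[ℂ] b) p * (if x = p.1 * p.2 then (1 : ℂ) else 0)) :=
      (summable_chi B hω x (a ⊗ₜ[ℂ] b)).of_norm
    rw [LinearMap.mul'_apply]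
    rw [Summable.tsum_prod' hsum (fun u => hsum.prod_factor u)]
    rw [← hmain.tsum_eq]
    apply tsum_congr
    intro u
    have hb := hasSum_coeff_mulLeft B hω (B.delta u) b x
    calc B.coeff a u * B.coeff (B.delta u * b) x
        = B.coeff a u * ∑' v, B.coeff b v * B.coeff (B.delta u * B.delta v) x := by
          rw [hb.tsum_eq]
      _ = ∑' v, B.coeff a u * (B.coeff b v * B.coeff (B.delta u * B.delta v) x) := by
          rw [tsum_mul_left]
      _ = ∑' v, Cmap B (a ⊗ₜ[ℂ] b) (u, v) * (if x = (u, v).1 * (u, v).2 then 1 else 0) := by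
          apply tsum_congr
          intro v
          rw [B.delta_mul, B.coeff_delta, Cmap_tmul]
          ring
  | add m₁ m₂ h₁ h₂ =>
    have s1 : Summable (fun p : S × S =>
        Cmap B m₁ p * (if x = p.1 * p.2 then (1 : ℂ) else 0)) :=
      (summable_chi B hω x m₁).of_norm
    have s2 : Summable (fun p : S × S =>
        Cmap B m₂ p * (if x = p.1 * p.2 then (1 : ℂ) else 0)) :=
      (summable_chi B hω x m₂).of_norm
    rw [map_add, map_add, Pi.add_apply, h₁, h₂, ← Summable.tsum_add s1 s2]
    apply tsum_congr
    intro p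
    rw [map_add, Pi.add_apply, add_mul]

lemma Cmap_tmulLeft (hcanc : ∀ a b c : S, a * b = a * c → b = c) (hω : IsWeight ω)
    (s x y : S) (m : A ⊗[ℂ] A) :
    Cmap B (tmulLeft (B.delta s) m) (s * x, y) = Cmap B m (x, y) := by
  induction m using TensorProduct.induction_on with
  | zero => simp
  | tmul a b =>
    simp only [tmulLeft, TensorProduct.map_tmul, LinearMap.mulLeft_apply,
      LinearMap.id_coe, id_eq, Cmap_tmul]
    rw [coeff_deltaMulDelta B hcanc hω]
  | add m₁ m₂ h₁ h₂ => simp [map_add, h₁, h₂]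

lemma Cmap_tmulRight_zero (hω : IsWeight ω) (s y : S) (hy : ∀ v, y ≠ v * s)
    (m : A ⊗[ℂ] A) (x : S) :
    Cmap B (tmulRight (B.delta s) m) (x, y) = 0 := by
  induction m using TensorProduct.induction_on with
  | zero => simp
  | tmul a b =>
    simp only [tmulRight, TensorProduct.map_tmul, LinearMap.mulRight_apply,
      LinearMap.id_coe, id_eq, Cmap_tmul]
    rw [coeff_mulDelta_zero B hω s y hy, mul_zero]
  | add m₁ m₂ h₁ h₂ => simp [map_add, h₁, h₂]

end Stmt17Aux

open Stmt17Aux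

/-- If `S` is a left cancellative semigroup with weight `ω` and
`ℓ¹(S,ω)` is pseudo-amenable, then `S` is a group. -/
theorem stmt17 (S : Type) [Semigroup S] [Nonempty S]
    (hcanc : ∀ a b c : S, a * b = a * c → b = c)
    (ω : S → ℝ) (hω : IsWeight ω)
    (A : Type) [NormedRing A] [NormedAlgebra ℂ A] [CompleteSpace A]
    (B : BeurlingStructure S ω A) (h : IsPseudoAmenable A) :
    ∃ e : S, (∀ s : S, e * s = s ∧ s * e = s) ∧
      ∀ s : S, ∃ t : S, s * t = e ∧ t * s = e := by
  classical
  obtain ⟨ι, l, hl, m, hdiag, happ⟩ := h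
  haveI : l.NeBot := hl
  -- coefficientwise convergence of `δ_s * π(m i)` to `δ_s`
  have hcoefconv : ∀ s x : S,
      Tendsto (fun i => B.coeff (B.delta s * LinearMap.mul' ℂ A (m i)) x) l
        (nhds (B.coeff (B.delta s) x)) := by
    intro s x
    exact ((coeffL B hω x).continuous.tendsto (B.delta s)).comp (happ (B.delta s))
  -- each s has a local right identity
  have hesx : ∀ s : S, ∃ es : S, s * es = s := by
    intro s
    by_contra hno
    push_neg at hno
    have h0 : ∀ i, B.coeff (B.delta s * LinearMap.mul' ℂ A (m i)) s = 0 := fun i =>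
      coeff_deltaMul_zero B hω s s (fun u hh => hno u hh.symm) _
    have hT : Tendsto (fun _ : ι => (0 : ℂ)) l (nhds (B.coeff (B.delta s) s)) := by
      have := hcoefconv s s
      simpa [h0] using this
    have h1 : B.coeff (B.delta s) s = 0 :=
      tendsto_nhds_unique hT tendsto_const_nhds
    rw [B.coeff_delta, if_pos rfl] at h1
    exact one_ne_zero h1
  choose es hes using hesx
  -- the coefficients of π(m i) converge pointwise to the indicator of es s
  have hlim : ∀ s u : S,
      Tendsto (fun i => B.coeff (LinearMap.mul' ℂ A (m i)) u) l
        (nhds (if u = es s then 1 else 0)) := by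
    intro s u
    have h1 : ∀ i, B.coeff (B.delta s * LinearMap.mul' ℂ A (m i)) (s * u)
        = B.coeff (LinearMap.mul' ℂ A (m i)) u := fun i =>
      coeff_deltaMulDelta B hcanc hω s u _
    have h2 := hcoefconv s (s * u)
    rw [B.coeff_delta] at h2
    have h3 : (if s * u = s then (1 : ℂ) else 0) = (if u = es s then 1 else 0) := by
      by_cases hc : u = es s
      · subst hc; rw [if_pos (hes s), if_pos rfl]
      · rw [if_neg hc, if_neg]
        intro hcc
        exact hc (hcanc s u (es s) (hcc.trans (hes s).symm))
    rw [h3] at h2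
    exact h2.congr h1
  -- all the local identities coincide
  have hescst : ∀ s t : S, es s = es t := by
    intro s t
    have h1 := hlim s (es s)
    rw [if_pos rfl] at h1
    have h2 := hlim t (es s)
    have h12 := tendsto_nhds_unique h1 h2
    by_contra hne
    rw [if_neg hne] at h12
    exact one_ne_zero h12
  obtain ⟨s₀⟩ := ‹Nonempty S›
  refine ⟨es s₀, ?_, ?_⟩
  case refine_1 =>
    intro s
    have hre : s * es s₀ = s := by rw [hescst s₀ s]; exact hes s
    refine ⟨?_, hre⟩
    apply hcanc s₀
    rw [← mul_assoc]
    rw [show s₀ * es s₀ = s₀ from hes s₀]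
  case refine_2 =>
    have hre : ∀ s : S, s * es s₀ = s := fun s => by rw [hescst s₀ s]; exact hes s
    have hle : ∀ t : S, es s₀ * t = t := fun t => by
      apply hcanc s₀
      rw [← mul_assoc, hes s₀]
    have hlime : Tendsto (fun i => B.coeff (LinearMap.mul' ℂ A (m i)) (es s₀)) l (nhds 1) := by
      have := hlim s₀ (es s₀)
      rwa [if_pos rfl] at this
    intro s
    have hinv : ∃ t, t * s = es s₀ := by
      by_contra hno
      push_neg at hno
      have key : ∀ i, ω s * ‖B.coeff (LinearMap.mul' ℂ A (m i)) (es s₀)‖ ≤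
          projNorm A A (tmulLeft (B.delta s) (m i) - tmulRight (B.delta s) (m i)) := by
        intro i
        set e := es s₀ with hedef
        set M := m i with hM
        set M' := tmulLeft (B.delta s) M - tmulRight (B.delta s) M with hM'
        have hmaster := master B hω M'
        have hins : Function.Injective (fun p : S × S => (s * p.1, p.2)) := by
          intro p q hpq
          have hpq' : ((s * p.1, p.2) : S × S) = (s * q.1, q.2) := hpq
          have h12 := Prod.ext_iff.mp hpq'
          exact Prod.ext (hcanc s _ _ h12.1) h12.2
        have hχsum := summable_chi B hω e M
        have hcoeffle : ‖B.coeff (LinearMap.mul' ℂ A M) e‖ ≤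
            ∑' p : S × S, ‖Cmap B M p * (if e = p.1 * p.2 then (1 : ℂ) else 0)‖ := by
          rw [coeff_pi B hω e M]
          exact norm_tsum_le_tsum_norm hχsum
        have hpt : ∀ p : S × S,
            ‖Cmap B M p * (if e = p.1 * p.2 then (1 : ℂ) else 0)‖ * ω s ≤
            (fun q : S × S => ‖Cmap B M' q‖ * (ω q.1 * ω q.2)) ((s * p.1, p.2)) := by
          intro p
          by_cases hc : e = p.1 * p.2
          · rw [if_pos hc, mul_one]
            have hC : Cmap B M' (s * p.1, p.2) = Cmap B M (p.1, p.2) := by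
              rw [hM', map_sub, Pi.sub_apply,
                Cmap_tmulLeft B hcanc hω s p.1 p.2 M,
                Cmap_tmulRight_zero B hω s p.2 ?_ M (s * p.1), sub_zero]
              intro v hv
              apply hno (p.1 * v)
              rw [mul_assoc, ← hv, ← hc]
            have hωs : ω s ≤ ω (s * p.1) * ω p.2 := by
              have h1 : s * p.1 * p.2 = s := by rw [mul_assoc, ← hc, hre s]
              calc ω s = ω (s * p.1 * p.2) := by rw [h1]
                _ ≤ ω (s * p.1) * ω p.2 := hω.2 _ _
            show ‖Cmap B M p‖ * ω s ≤ ‖Cmap B M' (s * p.1, p.2)‖ * (ω (s * p.1) * ω p.2)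
            rw [hC, show (p.1, p.2) = p from rfl]
            exact mul_le_mul_of_nonneg_left hωs (norm_nonneg _)
          · rw [if_neg hc, mul_zero, norm_zero, zero_mul]
            exact mul_nonneg (norm_nonneg _) (mul_nonneg (hω.1 _).le (hω.1 _).le)
        have hLsum : Summable (fun p : S × S =>
            ‖Cmap B M p * (if e = p.1 * p.2 then (1 : ℂ) else 0)‖ * ω s) :=
          hχsum.mul_right (ω s)
        have hstep : ∑' p : S × S,
            ‖Cmap B M p * (if e = p.1 * p.2 then (1 : ℂ) else 0)‖ * ω s ≤
            ∑' q : S × S, ‖Cmap B M' q‖ * (ω q.1 * ω q.2) :=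
          Summable.tsum_le_tsum_of_inj (fun p : S × S => (s * p.1, p.2)) hins
            (fun q _ => mul_nonneg (norm_nonneg _) (mul_nonneg (hω.1 _).le (hω.1 _).le))
            hpt hLsum hmaster.1
        calc ω s * ‖B.coeff (LinearMap.mul' ℂ A M) e‖
            = ‖B.coeff (LinearMap.mul' ℂ A M) e‖ * ω s := mul_comm _ _
          _ ≤ (∑' p : S × S, ‖Cmap B M p * (if e = p.1 * p.2 then (1 : ℂ) else 0)‖) * ω s :=
              mul_le_mul_of_nonneg_right hcoeffle (hω.1 s).le
          _ = ∑' p : S × S, ‖Cmap B M p * (if e = p.1 * p.2 then (1 : ℂ) else 0)‖ * ω s :=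
              (tsum_mul_right).symm
          _ ≤ ∑' q : S × S, ‖Cmap B M' q‖ * (ω q.1 * ω q.2) := hstep
          _ ≤ projNorm A A M' := hmaster.2
      have hlimL : Tendsto (fun i => ω s * ‖B.coeff (LinearMap.mul' ℂ A (m i)) (es s₀)‖)
          l (nhds (ω s * 1)) := by
        have h1 : Tendsto (fun i => ‖B.coeff (LinearMap.mul' ℂ A (m i)) (es s₀)‖) l
            (nhds ‖(1 : ℂ)‖) := hlime.norm
        rw [norm_one] at h1
        exact h1.const_mul (ω s)
      have hle0 := le_of_tendsto_of_tendsto' hlimL (hdiag (B.delta s)) key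
      rw [mul_one] at hle0
      exact absurd hle0 (not_le.mpr (hω.1 s))
    obtain ⟨t, hts⟩ := hinv
    refine ⟨t, ?_, hts⟩
    apply hcanc t
    rw [← mul_assoc, hts, hle t, hre t]
end
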